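/- Let G ∈ G* be 2-connected, let C be a longest odd cycle in G with |C| ≥ 5. Then C has no chords, i.e., the induced subgraph G[V(C)] is exactly the cycle C. -/

import Mathlib

open SimpleGraph

/-- Adjacency in the line graph `L(G)`: two distinct edges sharing an endpoint. -/
def lineAdj {V : Type*} (G : SimpleGraph V) (e f : G.edgeSet) : Prop :=
  e ≠ f ∧ ∃ x : V, x ∈ (e : Sym2 V) ∧ x ∈ (f : Sym2 V)

/-- `D` is an orientation of the (loopless) adjacency relation `Adj`:
every arc of `D` is an edge, and every edge gets at least one of its two arcs. -/
def IsOrientation {α : Type*} (Adj : α → α → Prop) (D : α → α → Prop) : Prop :=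
  (∀ a b, D a b → Adj a b) ∧ (∀ a b, Adj a b → D a b ∨ D b a)

/-- A digraph (relation) is kernel-perfect if every induced subdigraph has a kernel:
an independent set `S` such that every vertex outside `S` has an out-neighbor in `S`. -/
def KernelPerfect {α : Type*} (D : α → α → Prop) : Prop :=
  ∀ Z : Set α, ∃ S ⊆ Z, (∀ a ∈ S, ∀ b ∈ S, ¬ D a b) ∧
    ∀ z ∈ Z, z ∉ S → ∃ s ∈ S, D z s

/-- Out-degree of a vertex in a digraph given as a relation. -/
noncomputable def outDeg {α : Type*} (D : α → α → Prop) (a : α) : ℕ := {b | D a b}.ncard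

/-- Degree of a vertex. -/
noncomputable def deg {V : Type*} (G : SimpleGraph V) (v : V) : ℕ := (G.neighborSet v).ncard

/-- Maximum degree. -/
noncomputable def maxDeg {V : Type*} (G : SimpleGraph V) : ℕ := sSup (Set.range (deg G))

/-- `G` is `f`-edge-orientable: `L(G)` admits a kernel-perfect orientation with
`1 + d⁺(e) ≤ f e` for every edge `e`. -/
def EdgeOrientable {V : Type*} (G : SimpleGraph V) (f : G.edgeSet → ℕ) : Prop :=
  ∃ D : G.edgeSet → G.edgeSet → Prop,
    IsOrientation (lineAdj G) D ∧ KernelPerfect D ∧ ∀ e, outDeg D e + 1 ≤ f e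

open Classical in
/-- The function `f_{k,v}`: `deg v` on edges incident to `v`, and `k` elsewhere. -/
noncomputable def fkv {V : Type*} (G : SimpleGraph V) (k : ℕ) (v : V) (e : G.edgeSet) : ℕ :=
  if v ∈ (e : Sym2 V) then deg G v else k

/-- `G` is strongly `k`-edge-orientable. -/
def StronglyEdgeOrientable {V : Type*} (G : SimpleGraph V) (k : ℕ) : Prop :=
  ∀ v : V, EdgeOrientable G (fkv G k v)

/-- `G` is `f`-edge-choosable. -/
def FEdgeChoosable {V : Type*} (G : SimpleGraph V) (f : G.edgeSet → ℕ) : Prop :=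
  ∀ ℓ : G.edgeSet → Finset ℕ, (∀ e, f e ≤ (ℓ e).card) →
    ∃ φ : G.edgeSet → ℕ, (∀ e, φ e ∈ ℓ e) ∧
      ∀ e₁ e₂, lineAdj G e₁ e₂ → φ e₁ ≠ φ e₂

/-- `G ∈ G*`: any two distinct odd cycles share at most one edge. -/
def InGStar {V : Type*} (G : SimpleGraph V) : Prop :=
  ∀ (u w : V) (c₁ : G.Walk u u) (c₂ : G.Walk w w),
    c₁.IsCycle → c₂.IsCycle → Odd c₁.length → Odd c₂.length →
    {e | e ∈ c₁.edges} ≠ {e | e ∈ c₂.edges} →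
    ({e | e ∈ c₁.edges} ∩ {e | e ∈ c₂.edges}).ncard ≤ 1

/-- `G` is 2-connected: connected, and still connected after deleting any one vertex. -/
def TwoConn {V : Type*} (G : SimpleGraph V) : Prop :=
  G.Connected ∧ ∀ v : V, (G.induce {w | w ≠ v}).Connected

/-- A block of `G`: a maximal 2-connected subgraph. -/
def IsBlock {V : Type*} (G : SimpleGraph V) (B : G.Subgraph) : Prop :=
  TwoConn B.coe ∧ ∀ B' : G.Subgraph, TwoConn B'.coe → B ≤ B' → B = B'

/-- Vertex type of the theta graph with path lengths `l`: two hubs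
(`Sum.inl false`, `Sum.inl true`) plus the internal vertices of each path. -/
def ThetaVert (l : List ℕ) : Type := Bool ⊕ (Σ i : Fin l.length, Fin (l.get i - 1))

/-- The theta graph `Θ_{l₁,…,l_k}`: two hubs joined by internally disjoint paths,
the `i`-th of length `l i`. -/
def thetaGraph (l : List ℕ) : SimpleGraph (ThetaVert l) :=
  SimpleGraph.fromRel (fun a b =>
    match a, b with
    | Sum.inl false, Sum.inl true => 1 ∈ l
    | Sum.inl false, Sum.inr ⟨_, j⟩ => j.val = 0
    | Sum.inl true, Sum.inr ⟨i, j⟩ => j.val = l.get i - 2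
    | Sum.inr ⟨i, j⟩, Sum.inr ⟨i', j'⟩ => i.val = i'.val ∧ j'.val = j.val + 1
    | _, _ => False)

/-- `v` (outside `c`) touches `w ∈ c`: some `v,w`-path meets `c` only at `w`. -/
def Touches {V : Type*} (G : SimpleGraph V) {u : V} (c : G.Walk u u) (v w : V) : Prop :=
  w ∈ c.support ∧ ∃ p : G.Walk v w, p.IsPath ∧ ∀ x ∈ p.support, x ∈ c.support → x = w


/-- A walk of length 1 from `a` to `b` has `s(a,b)` among its edges. -/
lemma edge_mem_of_length_one {V : Type*} {G : SimpleGraph V} {a b : V}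
    (p : G.Walk a b) (h : p.length = 1) : s(a, b) ∈ p.edges := by
  cases p with
  | nil => simp at h
  | cons hadj q =>
    have hq0 : q.length = 0 := by simpa using h
    have := q.eq_of_length_eq_zero hq0
    subst this
    exact List.mem_cons_self

/-- Core contradiction: a path `p` of even length ≥ 2 whose edges all lie on an odd
cycle `c`, closed up by a chord, yields two odd cycles sharing ≥ 2 edges. -/
lemma chord_contra {V : Type*} {G : SimpleGraph V} (hG : InGStar G) {u a b : V}
    (c : G.Walk u u) (hc : c.IsCycle) (hcodd : Odd c.length)
    (p : G.Walk a b) (hp : p.IsPath) (hadj : G.Adj b a)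
    (hsub : ∀ e ∈ p.edges, e ∈ c.edges) (hchord : s(b, a) ∉ c.edges)
    (hlen2 : 2 ≤ p.length) (hpodd : Odd (p.length + 1)) : False := by
  classical
  have hchord' : s(b, a) ∉ p.edges := fun h => hchord (hsub _ h)
  set cyc : G.Walk b b := SimpleGraph.Walk.cons hadj p with hcyc
  have hcycC : cyc.IsCycle := (SimpleGraph.Walk.cons_isCycle_iff p hadj).mpr ⟨hp, hchord'⟩
  have hcycodd : Odd cyc.length := by simpa [hcyc, Nat.add_comm] using hpodd
  have hne : {e | e ∈ c.edges} ≠ {e | e ∈ cyc.edges} := by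
    intro h
    have : s(b, a) ∈ {e | e ∈ c.edges} := by
      rw [h]; exact List.mem_cons_self
    exact hchord this
  have hcard := hG u b c cyc hc hcycC hcodd hcycodd hne
  -- two distinct edges of `p` lie in both edge sets
  have hplen : 2 ≤ p.edges.length := by rwa [p.length_edges]
  have h0 : (0 : ℕ) < p.edges.length := by omega
  have h1 : (1 : ℕ) < p.edges.length := by omega
  set e0 := p.edges.get ⟨0, h0⟩
  set e1 := p.edges.get ⟨1, h1⟩
  have hne01 : e0 ≠ e1 := by
    intro h
    have hnd : p.edges.Nodup := hp.isTrail.edges_nodup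
    have := (List.Nodup.get_inj_iff hnd).mp h
    simp at this
  have hmem0 : e0 ∈ p.edges := List.get_mem _ _
  have hmem1 : e1 ∈ p.edges := List.get_mem _ _
  have hsubpair : ({e0, e1} : Set (Sym2 V)) ⊆ {e | e ∈ c.edges} ∩ {e | e ∈ cyc.edges} := by
    intro e he
    rcases he with rfl | he
    · exact ⟨hsub _ hmem0, List.mem_cons_of_mem _ hmem0⟩
    · rcases he with rfl
      exact ⟨hsub _ hmem1, List.mem_cons_of_mem _ hmem1⟩
  have hfin : ({e | e ∈ c.edges} ∩ {e | e ∈ cyc.edges} : Set (Sym2 V)).Finite :=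
    (c.edges.finite_toSet).inter_of_left _
  have h2le : 2 ≤ ({e | e ∈ c.edges} ∩ {e | e ∈ cyc.edges} : Set (Sym2 V)).ncard := by
    have := Set.ncard_le_ncard hsubpair hfin
    rwa [Set.ncard_pair hne01] at this
  omega

/-- in a 2-connected `G ∈ G*`, a longest odd cycle of length ≥ 5
has no chords: every edge of `G` between cycle vertices is a cycle edge. -/
theorem stmt6 {V : Type*} (G : SimpleGraph V) (hG : InGStar G) (h2 : TwoConn G)
    (u : V) (c : G.Walk u u) (hc : c.IsCycle) (hodd : Odd c.length)
    (hlongest : ∀ (w : V) (c' : G.Walk w w), c'.IsCycle → Odd c'.length →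
      c'.length ≤ c.length)
    (hlen : 5 ≤ c.length) :
    ∀ x y : V, x ∈ c.support → y ∈ c.support → G.Adj x y → s(x, y) ∈ c.edges := by
  classical
  intro x y hx hy hadj
  by_contra hne
  have hxy : x ≠ y := hadj.ne
  -- membership in the tail of the support of the (non-nil) closed walk
  have htail : ∀ z ∈ c.support, z ∈ c.support.tail := by
    cases c with
    | nil => exact absurd rfl hc.ne_nil
    | cons h q =>
      intro z hz
      rw [SimpleGraph.Walk.support_cons, List.mem_cons] at hz
      rcases hz with rfl | hz
      · simpa using q.end_mem_support
      · simpa using hz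
  set c' := c.rotate x hx with hc'def
  have hc' : c'.IsCycle := hc.rotate hx
  have hrot := SimpleGraph.Walk.support_rotate c x hx
  have hy' : y ∈ c'.support := by
    have : y ∈ c'.support.tail := hrot.mem_iff.mpr (htail y hy)
    exact List.mem_of_mem_tail this
  have hedgerot := c.rotate_edges x hx
  have hlenrot : c'.length = c.length := by
    have := hedgerot.perm.length_eq
    rwa [c'.length_edges, c.length_edges] at this
  set t := c'.takeUntil y hy' with htdef
  set d := c'.dropUntil y hy' with hddef
  have hspec : t.append d = c' := c'.take_spec hy'
  have hst : c'.support.tail = t.support.tail ++ d.support.tail := by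
    rw [← hspec, SimpleGraph.Walk.tail_support_append]
  have hnodup : c'.support.tail.Nodup := hc'.support_nodup
  rw [hst] at hnodup
  have hdisj := List.disjoint_of_nodup_append hnodup
  -- t is a path
  have hxd : x ∈ d.support.tail := SimpleGraph.Walk.end_mem_tail_support_of_ne (Ne.symm hxy) d
  have hyt : y ∈ t.support.tail := SimpleGraph.Walk.end_mem_tail_support_of_ne hxy t
  have htpath : t.IsPath := by
    rw [SimpleGraph.Walk.isPath_def, t.support_eq_cons]
    exact List.nodup_cons.mpr ⟨fun h => hdisj h hxd, (List.nodup_append.mp hnodup).1⟩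
  have hdpath : d.IsPath := by
    rw [SimpleGraph.Walk.isPath_def, d.support_eq_cons]
    exact List.nodup_cons.mpr ⟨fun h => hdisj hyt h, (List.nodup_append.mp hnodup).2.1⟩
  -- edges of t, d lie on c
  have htsub : ∀ e ∈ t.edges, e ∈ c.edges := fun e he =>
    hedgerot.mem_iff.mp (c'.edges_takeUntil_subset hy' he)
  have hdsub : ∀ e ∈ d.edges, e ∈ c.edges := fun e he =>
    hedgerot.mem_iff.mp (c'.edges_dropUntil_subset hy' he)
  -- lengths
  have hsum : t.length + d.length = c.length := by
    have := congr_arg SimpleGraph.Walk.length hspec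
    rwa [SimpleGraph.Walk.length_append, hlenrot] at this
  have htpos : t.length ≠ 0 := fun h => hxy (t.eq_of_length_eq_zero h)
  have hdpos : d.length ≠ 0 := fun h => hadj.ne.symm (d.eq_of_length_eq_zero h)
  have ht1 : t.length ≠ 1 := fun h => hne (htsub _ (edge_mem_of_length_one t h))
  have hd1 : d.length ≠ 1 := by
    intro h
    have := hdsub _ (edge_mem_of_length_one d h)
    rw [Sym2.eq_swap] at this
    exact hne this
  have ht2 : 2 ≤ t.length := by omega
  have hd2 : 2 ≤ d.length := by omega
  -- parity split
  rcases Nat.even_or_odd t.length with hev | hodd'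
  · refine chord_contra hG c hc hodd t htpath hadj.symm htsub ?_ ht2 ?_
    · rwa [Sym2.eq_swap]
    · exact Even.add_one hev
  · have hdev : Even d.length := by
      rcases hodd with ⟨k, hk⟩
      rcases hodd' with ⟨m, hm⟩
      refine ⟨(d.length) / 2, ?_⟩
      omega
    exact chord_contra hG c hc hodd d hdpath hadj hdsub hne hd2 (Even.add_one hdev)
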